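/- Let n ≥ 2 be an integer and let c ∈ ℂ satisfy c^{n-1} = −1 (so that the critical orbit of f_c has period two). Then every periodic point z ≠ 0 of f_c is a unit in the ring of algebraic integers: both z and z⁻¹ are algebraic integers. -/

import Mathlib

open Polynomial
set_option synthInstance.maxHeartbeats 1000000
set_option maxHeartbeats 1000000

lemma periodic_isIntegral (n : ℕ) (hn : 2 ≤ n) (c : ℂ) (hcint : IsIntegral ℤ c)
    (h : ℕ) (hh : 1 ≤ h) (w : ℂ) (hw : (fun z : ℂ => z ^ n + c)^[h] w = w) :
    IsIntegral ℤ w := by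
  set R := integralClosure ℤ ℂ with hR
  have hcR : c ∈ R := hcint
  set g : Polynomial R := X ^ n + C ⟨c, hcR⟩ with hg
  have hgmonic : g.Monic := monic_X_pow_add_C _ (by omega)
  have hgdeg : g.natDegree = n := by
    rw [hg]; exact Polynomial.natDegree_X_pow_add_C
  have hgev : ∀ x : ℂ, aeval x g = x ^ n + c := by
    intro x
    rw [hg, map_add, map_pow, aeval_X, aeval_C]
    rfl
  set P : ℕ → Polynomial R := fun k => (fun q => q.comp g)^[k] X with hP
  have hPsucc : ∀ k, P (k + 1) = (P k).comp g := by
    intro k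
    simp [hP, Function.iterate_succ_apply']
  have key : ∀ k, (P k).Monic ∧ (P k).natDegree = n ^ k ∧
      ∀ x : ℂ, aeval x (P k) = (fun z : ℂ => z ^ n + c)^[k] x := by
    intro k
    induction k with
    | zero => exact ⟨monic_X, by simp [hP], by simp [hP]⟩
    | succ k ih =>
      obtain ⟨hm, hd, he⟩ := ih
      refine ⟨?_, ?_, ?_⟩
      · rw [hPsucc]
        exact hm.comp hgmonic (by omega)
      · rw [hPsucc, natDegree_comp, hd, hgdeg, pow_succ]
      · intro x
        rw [hPsucc, aeval_comp, hgev, he, Function.iterate_succ_apply]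
  obtain ⟨hm, hd, he⟩ := key h
  have hdeg : (X : Polynomial R).degree < (P h).degree := by
    rw [degree_X, degree_eq_natDegree hm.ne_zero, hd]
    exact_mod_cast Nat.one_lt_pow (by omega) (by omega)
  have hint : IsIntegral R w := by
    refine ⟨P h - X, hm.sub_of_left hdeg, ?_⟩
    have : (aeval w) (P h - X) = 0 := by
      rw [map_sub, he, aeval_X, hw, sub_self]
    exact this
  exact isIntegral_trans w hint

theorem stmt17 (n : ℕ) (hn : 2 ≤ n) (c : ℂ) (hc : c ^ (n - 1) = -1)
    (f : ℂ → ℂ) (hf : f = fun z : ℂ => z ^ n + c)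
    (z : ℂ) (hz0 : z ≠ 0) (hper : ∃ h : ℕ, 1 ≤ h ∧ f^[h] z = z) :
    IsIntegral ℤ z ∧ IsIntegral ℤ z⁻¹ := by
  subst hf
  obtain ⟨h, hh1, hzh⟩ := hper
  have hcint : IsIntegral ℤ c := by
    refine ⟨X ^ (n - 1) + C 1, monic_X_pow_add_C _ (by omega), ?_⟩
    have : (aeval c) (X ^ (n - 1) + C 1 : ℤ[X]) = 0 := by
      rw [map_add, map_pow, aeval_X, aeval_C, hc]
      norm_num
    exact this
  have hcn : c ^ n = -c := by
    have h1 : c ^ n = c ^ (n - 1) * c := by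
      rw [← pow_succ]; congr 1; omega
    rw [h1, hc]; ring
  set F : ℂ → ℂ := fun z : ℂ => z ^ n + c with hF
  set zs : ℕ → ℂ := fun i => F^[i] z with hzs
  have hzs0 : zs 0 = z := rfl
  have hstep : ∀ i, zs (i + 1) = zs i ^ n + c := by
    intro i
    simp only [hzs, Function.iterate_succ_apply']
    rfl
  have hcyc : zs h = zs 0 := hzh
  have hperi : ∀ i, F^[h] (zs i) = zs i := by
    intro i
    simp only [hzs, ← Function.iterate_add_apply]
    rw [add_comm h i, Function.iterate_add_apply, hzh]
  have hint : ∀ i, IsIntegral ℤ (zs i) := fun i =>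
    periodic_isIntegral n hn c hcint h hh1 (zs i) (hperi i)
  have hzint : IsIntegral ℤ z := hzs0 ▸ hint 0
  refine ⟨hzint, ?_⟩
  by_cases hzero : ∀ i, zs i ≠ 0
  · -- generic case: the whole orbit avoids 0
    set S : ℕ → ℂ := fun i => ∑ j ∈ Finset.range n, zs i ^ j * c ^ (n - 1 - j) with hS
    have hfac : ∀ i, zs (i + 1) = (zs i - c) * S i := by
      intro i
      have hg := geom_sum₂_mul (zs i) c n
      rw [hstep i, hS, mul_comm]
      dsimp only
      rw [hg, hcn]
      ring
    set Z : ℂ := ∏ i ∈ Finset.range h, zs i with hZ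
    set U : ℂ := ∏ i ∈ Finset.range h, S i with hU
    have hZne : Z ≠ 0 := Finset.prod_ne_zero_iff.mpr fun i _ => hzero i
    have hh : h - 1 + 1 = h := by omega
    have e1 : Z = (∏ i ∈ Finset.range (h - 1), zs (i + 1)) * z := by
      have := Finset.prod_range_succ' zs (h - 1)
      rw [hh] at this
      rw [hZ, this, hzs0]
    set P1 : ℂ := ∏ i ∈ Finset.range (h - 1), zs (i + 1) with hP1
    have hshift : ∏ i ∈ Finset.range h, zs (i + 1) = Z := by
      have e3 := Finset.prod_range_succ (fun i => zs (i + 1)) (h - 1)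
      rw [hh] at e3
      calc ∏ i ∈ Finset.range h, zs (i + 1)
          = (∏ i ∈ Finset.range (h - 1), zs (i + 1)) * zs h := e3
        _ = P1 * z := by rw [hcyc, hzs0, hP1]
        _ = Z := e1.symm
    have hshiftc : ∏ i ∈ Finset.range h, (zs (i + 1) - c)
        = ∏ i ∈ Finset.range h, (zs i - c) := by
      have e4 := Finset.prod_range_succ (fun i => zs (i + 1) - c) (h - 1)
      rw [hh] at e4
      have e5 := Finset.prod_range_succ' (fun i => zs i - c) (h - 1)
      rw [hh] at e5
      calc ∏ i ∈ Finset.range h, (zs (i + 1) - c)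
          = (∏ i ∈ Finset.range (h - 1), (zs (i + 1) - c)) * (zs h - c) := e4
        _ = (∏ i ∈ Finset.range (h - 1), (zs (i + 1) - c)) * (zs 0 - c) := by rw [hcyc]
        _ = ∏ i ∈ Finset.range h, (zs i - c) := e5.symm
    have key1 : ∏ i ∈ Finset.range h, (zs (i + 1) - c) = Z ^ n := by
      have : ∀ i ∈ Finset.range h, zs (i + 1) - c = zs i ^ n := by
        intro i _; rw [hstep]; ring
      rw [Finset.prod_congr rfl this, Finset.prod_pow]
    have key2 : Z = Z ^ n * U := by
      calc Z = ∏ i ∈ Finset.range h, zs (i + 1) := hshift.symm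
        _ = ∏ i ∈ Finset.range h, ((zs i - c) * S i) :=
            Finset.prod_congr rfl fun i _ => hfac i
        _ = (∏ i ∈ Finset.range h, (zs i - c)) * U := Finset.prod_mul_distrib
        _ = (∏ i ∈ Finset.range h, (zs (i + 1) - c)) * U := by rw [hshiftc]
        _ = Z ^ n * U := by rw [key1]
    have hZn : Z ^ n = Z ^ (n - 1) * Z := by rw [← pow_succ]; congr 1; omega
    have hunit : Z ^ (n - 1) * U = 1 := by
      refine mul_left_cancel₀ hZne ?_
      rw [mul_one]
      calc Z * (Z ^ (n - 1) * U) = Z ^ (n - 1) * Z * U := by ring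
        _ = Z ^ n * U := by rw [← hZn]
        _ = Z := key2.symm
    have hZ2 : Z ^ (n - 2) * Z = Z ^ (n - 1) := by rw [← pow_succ]; congr 1; omega
    have hmul : z * (Z ^ (n - 2) * U * P1) = 1 := by
      calc z * (Z ^ (n - 2) * U * P1) = Z ^ (n - 2) * (P1 * z) * U := by ring
        _ = Z ^ (n - 2) * Z * U := by rw [← e1]
        _ = Z ^ (n - 1) * U := by rw [hZ2]
        _ = 1 := hunit
    have hcm : c ∈ integralClosure ℤ ℂ := hcint
    have hZm : Z ∈ integralClosure ℤ ℂ :=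
      Subalgebra.prod_mem _ fun i _ => hint i
    have hUm : U ∈ integralClosure ℤ ℂ :=
      Subalgebra.prod_mem _ fun i _ =>
        Subalgebra.sum_mem _ fun j _ =>
          mul_mem (pow_mem (hint i) j) (pow_mem hcm (n - 1 - j))
    have hP1m : P1 ∈ integralClosure ℤ ℂ :=
      Subalgebra.prod_mem _ fun i _ => hint (i + 1)
    have hwm : Z ^ (n - 2) * U * P1 ∈ integralClosure ℤ ℂ :=
      mul_mem (mul_mem (pow_mem hZm (n - 2)) hUm) hP1m
    rw [inv_eq_of_mul_eq_one_right hmul]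
    exact hwm
  · -- exceptional case: the orbit hits 0, hence z = c
    push_neg at hzero
    obtain ⟨k, hk⟩ := hzero
    have hF0 : F 0 = c := by
      simp [hF, zero_pow (by omega : n ≠ 0)]
    have hFc : F c = 0 := by
      simp only [hF, hcn]
      ring
    have horb : ∀ j, F^[j] 0 = 0 ∨ F^[j] 0 = c := by
      intro j
      induction j with
      | zero => exact Or.inl rfl
      | succ j ih =>
        rcases ih with h0 | h0 <;> rw [Function.iterate_succ_apply', h0]
        · exact Or.inr hF0
        · exact Or.inl hFc
    have hfix : ∀ m, F^[m * h] z = z := by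
      intro m
      rw [mul_comm m h, Function.iterate_mul]
      exact Function.iterate_fixed hzh m
    have hle : k ≤ (k + 1) * h := by nlinarith
    have hm : F^[(k + 1) * h - k] 0 = z := by
      rw [← hk]
      show F^[(k + 1) * h - k] (F^[k] z) = z
      rw [← Function.iterate_add_apply, Nat.sub_add_cancel hle]
      exact hfix (k + 1)
    have hzc : z = c := by
      rcases horb ((k + 1) * h - k) with h0 | h0 <;> rw [h0] at hm
      · exact absurd hm.symm hz0
      · exact hm.symm
    have hic : c ^ (n - 2) * c = c ^ (n - 1) := by rw [← pow_succ]; congr 1; omega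
    have hinv : z * (-(c ^ (n - 2))) = 1 := by
      rw [hzc]
      calc c * (-(c ^ (n - 2))) = -(c ^ (n - 2) * c) := by ring
        _ = -(c ^ (n - 1)) := by rw [hic]
        _ = 1 := by rw [hc]; ring
    rw [inv_eq_of_mul_eq_one_right hinv]
    exact (hcint.pow (n - 2)).neg
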